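/- Fix Z ∈ (0,1) and set λ = −ln(1−Z) > 0. Fix δ > 0, and let (r(m))_m be any sequence of integers with 2 ≤ r(m) ≤ log₂ m − log₂ λ − δ for all sufficiently large m. Then ∑_{t=2}^{r(m)} [ 2^{m−r(m)+t} · (1 − (1−Z)^{2^{r(m)−t}})^{2^{m−r(m)+t}−1} · ∏_{s=t+1}^{r(m)} (2^{m−r(m)+s} − 1) ] → 0 as m → ∞, where empty products equal 1. -/
import Mathlib


open Finset Filter

set_option maxHeartbeats 1600000 in
/-- Fix `Z ∈ (0,1)`, `λ = −ln(1−Z)`, `δ > 0`, and a sequence of integers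
`r(m)` with `2 ≤ r(m) ≤ log₂ m − log₂ λ − δ` for all sufficiently large `m`. Then the sum
of per-level aggregation error terms
`∑_{t=2}^{r} 2^{m−r+t}·(1−(1−Z)^{2^{r−t}})^{2^{m−r+t}−1}·∏_{s=t+1}^{r}(2^{m−r+s}−1)`
(with `r = r(m)`) tends to `0` as `m → ∞`. -/
theorem aggregation_terms_tendsto_zero (Z : ℝ) (hZ : Z ∈ Set.Ioo (0 : ℝ) 1)
    (δ : ℝ) (hδ : 0 < δ) (r : ℕ → ℕ)
    (hr : ∀ᶠ m in atTop, 2 ≤ r m ∧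
      (r m : ℝ) ≤ Real.logb 2 m - Real.logb 2 (-Real.log (1 - Z)) - δ) :
    Tendsto (fun m : ℕ =>
      ∑ t ∈ Finset.Icc 2 (r m),
        (2 : ℝ) ^ (m - r m + t) *
          (1 - (1 - Z) ^ (2 ^ (r m - t))) ^ (2 ^ (m - r m + t) - 1) *
          ∏ s ∈ Finset.Icc (t + 1) (r m), ((2 : ℝ) ^ (m - r m + s) - 1))
      atTop (nhds 0) := by
  obtain ⟨hZ0, hZ1⟩ := hZ
  have h1Z0 : (0:ℝ) < 1 - Z := by linarith
  have h1Z1 : 1 - Z < 1 := by linarith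
  set lam : ℝ := -Real.log (1 - Z) with hlam_def
  clear_value lam
  have hlam : 0 < lam := by
    have h := Real.log_neg h1Z0 h1Z1
    rw [hlam_def]; linarith
  have hlog2 : (7:ℝ)/12 < Real.log 2 := by
    have := Real.log_two_gt_d9; linarith
  have hlog2' : Real.log 2 < 1 := by
    have := Real.log_two_lt_d9; linarith
  have hlog2pos : (0:ℝ) < Real.log 2 := by linarith
  have hpow2 : ∀ k : ℕ, (2:ℝ) ^ k = Real.exp (k * Real.log 2) := by
    intro k
    rw [Real.exp_nat_mul, Real.exp_log (by norm_num : (0:ℝ) < 2)]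
  have hcast : Tendsto (fun m : ℕ => (m:ℝ)) atTop atTop := tendsto_natCast_atTop_atTop
  -- eventual fact 1 : the logarithmic bound is at most m
  have hlogev : ∀ᶠ x : ℝ in atTop, ‖Real.log x‖ ≤ (Real.log 2 / 2) * ‖x‖ :=
    Real.isLittleO_log_id_atTop.def (by positivity)
  have ev1 : ∀ᶠ m : ℕ in atTop, Real.logb 2 m - Real.logb 2 lam - δ ≤ (m:ℝ) := by
    filter_upwards [hcast.eventually hlogev,
      hcast.eventually_ge_atTop (2 * (-Real.logb 2 lam - δ)),
      hcast.eventually_ge_atTop (1:ℝ)] with m h1 h2 h3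
    have hm0 : (0:ℝ) ≤ m := by linarith
    have hlogup : Real.log (m:ℝ) ≤ (Real.log 2 / 2) * m := by
      rw [Real.norm_eq_abs, Real.norm_eq_abs, abs_of_nonneg hm0] at h1
      exact (le_abs_self _).trans h1
    have hlb : Real.logb 2 (m:ℝ) ≤ (m:ℝ)/2 := by
      rw [Real.logb, div_le_div_iff₀ hlog2pos (by norm_num : (0:ℝ) < 2)]
      nlinarith
    linarith
  -- eventual fact 2 : growth of exp(m/3) over m^3
  have hgrow : Tendsto (fun x : ℝ => Real.exp (x/3) / x ^ 3) atTop atTop := by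
    have h1 : Tendsto (fun x : ℝ => x / 3) atTop atTop :=
      tendsto_id.atTop_div_const (by norm_num)
    have h2 := (Real.tendsto_exp_div_pow_atTop 3).comp h1
    have h3 : Tendsto (fun x : ℝ => (Real.exp (x/3) / (x/3)^3) / 27) atTop atTop :=
      h2.atTop_div_const (by norm_num)
    apply h3.congr'
    filter_upwards [eventually_gt_atTop (0:ℝ)] with x hx
    field_simp
    ring
  have ev2 : ∀ᶠ m : ℕ in atTop, 2 / lam ≤ Real.exp ((m:ℝ)/3) / (m:ℝ)^3 :=
    (hgrow.comp hcast).eventually_ge_atTop _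
  -- limit of the majorant
  have htend : Tendsto (fun m : ℕ => Real.exp (-(m:ℝ))) atTop (nhds 0) := by
    have h1 : Tendsto (fun m : ℕ => -(m:ℝ)) atTop atBot :=
      tendsto_neg_atBot_iff.mpr hcast
    exact Real.tendsto_exp_atBot.comp h1
  -- nonnegativity
  have hnn : ∀ᶠ m : ℕ in atTop, (0:ℝ) ≤
      ∑ t ∈ Finset.Icc 2 (r m),
        (2 : ℝ) ^ (m - r m + t) *
          (1 - (1 - Z) ^ (2 ^ (r m - t))) ^ (2 ^ (m - r m + t) - 1) *
          ∏ s ∈ Finset.Icc (t + 1) (r m), ((2 : ℝ) ^ (m - r m + s) - 1) := by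
    filter_upwards with m
    apply Finset.sum_nonneg
    intro t ht
    have hw1 : (1 - Z) ^ (2 ^ (r m - t)) ≤ 1 := pow_le_one₀ h1Z0.le (by linarith)
    have hmid : (0:ℝ) ≤ 1 - (1-Z)^(2^(r m - t)) := by linarith
    apply mul_nonneg (mul_nonneg (by positivity) (pow_nonneg hmid _))
    apply Finset.prod_nonneg
    intro s hs
    have h1 : (1:ℝ) ≤ 2 ^ (m - r m + s) := one_le_pow₀ one_le_two
    linarith
  -- main bound
  have hle : ∀ᶠ m : ℕ in atTop,
      (∑ t ∈ Finset.Icc 2 (r m),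
        (2 : ℝ) ^ (m - r m + t) *
          (1 - (1 - Z) ^ (2 ^ (r m - t))) ^ (2 ^ (m - r m + t) - 1) *
          ∏ s ∈ Finset.Icc (t + 1) (r m), ((2 : ℝ) ^ (m - r m + s) - 1))
      ≤ Real.exp (-(m:ℝ)) := by
    filter_upwards [hr, ev1, ev2, hcast.eventually_ge_atTop (3:ℝ)] with m hm hev1 hev2 hm3
    obtain ⟨h2R, hRle⟩ := hm
    set R := r m with hRdef
    clear_value R
    have hm1 : (1:ℝ) ≤ m := by linarith
    have hm0 : (0:ℝ) < m := by linarith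
    have hRm : R ≤ m := by
      have h := hRle.trans hev1
      exact_mod_cast h
    -- 2^R ≤ m / lam
    have h2Rle : (2:ℝ) ^ R ≤ (m:ℝ) / lam := by
      have h1 : (R:ℝ) ≤ Real.logb 2 ((m:ℝ)/lam) := by
        rw [Real.logb_div (ne_of_gt hm0) (ne_of_gt hlam)]
        linarith
      have h2 : (2:ℝ) ^ (R:ℝ) ≤ (2:ℝ) ^ Real.logb 2 ((m:ℝ)/lam) :=
        Real.rpow_le_rpow_of_exponent_le one_le_two h1
      rwa [Real.rpow_natCast, Real.rpow_logb (by norm_num) (by norm_num) (by positivity)] at h2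
    have hlam2R : lam * (2:ℝ)^R ≤ (m:ℝ) := by
      rw [le_div_iff₀ hlam] at h2Rle
      linarith
    set A : ℝ := lam / m * Real.exp ((m:ℝ)/3) with hA_def
    clear_value A
    have hA2m2 : 2 * (m:ℝ)^2 ≤ A := by
      rw [div_le_div_iff₀ hlam (by positivity)] at hev2
      have h1 : 2 * (m:ℝ)^3 ≤ lam * Real.exp ((m:ℝ)/3) := by nlinarith
      rw [hA_def, div_mul_eq_mul_div, le_div_iff₀ hm0]
      nlinarith
    -- per-term bound
    have hBnn : (0:ℝ) ≤ (2:ℝ)^m * Real.exp (-A) * 2^(m*m) := by positivity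
    have key : ∀ t ∈ Finset.Icc 2 R,
        (2:ℝ)^(m - R + t) * (1 - (1-Z)^(2^(R - t)))^(2^(m - R + t) - 1) *
          ∏ s ∈ Finset.Icc (t+1) R, ((2:ℝ)^(m - R + s) - 1)
        ≤ (2:ℝ)^m * Real.exp (-A) * 2^(m*m) := by
      intro t ht
      rw [Finset.mem_Icc] at ht
      obtain ⟨ht2, htR⟩ := ht
      have hw_le_one : (1-Z)^(2^(R-t)) ≤ 1 := pow_le_one₀ h1Z0.le (by linarith)
      have hb1 : (2:ℝ)^(m - R + t) ≤ (2:ℝ)^m :=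
        pow_le_pow_right₀ one_le_two (by omega)
      -- product bound
      have hprodnn : (0:ℝ) ≤ ∏ s ∈ Finset.Icc (t+1) R, ((2:ℝ)^(m - R + s) - 1) := by
        apply Finset.prod_nonneg
        intro s hs
        have h1 : (1:ℝ) ≤ 2 ^ (m - R + s) := one_le_pow₀ one_le_two
        linarith
      have hb3 : ∏ s ∈ Finset.Icc (t+1) R, ((2:ℝ)^(m - R + s) - 1) ≤ (2:ℝ)^(m*m) := by
        have h1 : ∏ s ∈ Finset.Icc (t+1) R, ((2:ℝ)^(m - R + s) - 1)
            ≤ ∏ s ∈ Finset.Icc (t+1) R, (2:ℝ)^m := by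
          apply Finset.prod_le_prod
          · intro s hs
            have h1 : (1:ℝ) ≤ 2 ^ (m - R + s) := one_le_pow₀ one_le_two
            linarith
          · intro s hs
            rw [Finset.mem_Icc] at hs
            have h1 : (2:ℝ)^(m - R + s) ≤ (2:ℝ)^m :=
              pow_le_pow_right₀ one_le_two (by omega)
            linarith
        have h2 : (∏ s ∈ Finset.Icc (t+1) R, (2:ℝ)^m)
            = ((2:ℝ)^m) ^ (Finset.Icc (t+1) R).card := Finset.prod_const _
        have h3 : ((2:ℝ)^m) ^ (Finset.Icc (t+1) R).card ≤ (2:ℝ)^(m*m) := by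
          rw [← pow_mul]
          apply pow_le_pow_right₀ one_le_two
          apply Nat.mul_le_mul_left
          rw [Nat.card_Icc]; omega
        exact h1.trans (le_of_eq_of_le h2 h3)
      -- middle factor bound
      have hmid : (1 - (1-Z)^(2^(R-t)))^(2^(m-R+t) - 1) ≤ Real.exp (-A) := by
        set w : ℝ := (1-Z)^(2^(R-t)) with hw_def
        clear_value w
        have hw_pos : 0 < w := by rw [hw_def]; positivity
        -- w ≥ exp(-m/4)
        have hw_ge : Real.exp (-((m:ℝ)/4)) ≤ w := by
          have e1 : (1-Z) = Real.exp (-lam) := by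
            rw [hlam_def, neg_neg, Real.exp_log h1Z0]
          rw [hw_def, e1, ← Real.exp_nat_mul]
          apply Real.exp_le_exp.mpr
          -- ⊢ -(m/4) ≤ ↑(2^(R-t)) * -lam
          have hc1 : ((2^(R-t) : ℕ) : ℝ) ≤ ((2^(R-2) : ℕ) : ℝ) := by
            exact_mod_cast Nat.pow_le_pow_right (by norm_num)
              (show R - t ≤ R - 2 by omega)
          have hc2 : ((2^(R-2) : ℕ) : ℝ) * 4 = (2:ℝ)^R := by
            push_cast
            rw [show (4:ℝ) = 2^2 by norm_num, ← pow_add]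
            congr 1; omega
          have hstep : lam * ((2^(R-t) : ℕ) : ℝ) ≤ lam * ((2^(R-2) : ℕ) : ℝ) :=
            mul_le_mul_of_nonneg_left hc1 hlam.le
          have hstep2 : lam * ((2^(R-2) : ℕ) : ℝ) * 4 = lam * (2:ℝ)^R := by
            rw [mul_assoc, hc2]
          linarith
        -- K ≥ 2^(m-R)
        have hKge : 2^(m - R) ≤ 2^(m - R + t) - 1 := by
          have h1 : 2^(m - R + t) = 2^(m - R) * 2^t := pow_add 2 _ _
          have h2 : (4:ℕ) ≤ 2^t := by
            have : (2:ℕ)^2 ≤ 2^t := Nat.pow_le_pow_right (by norm_num) ht2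
            simpa using this
          have h3 : (1:ℕ) ≤ 2^(m-R) := Nat.one_le_two_pow
          have h4 : 2^(m-R) * 4 ≤ 2^(m-R+t) := by
            rw [h1]; exact Nat.mul_le_mul_left _ h2
          omega
        have hKge' : (2:ℝ)^(m - R) ≤ ((2^(m - R + t) - 1 : ℕ) : ℝ) := by
          have e : (2:ℝ)^(m-R) = ((2^(m-R) : ℕ) : ℝ) := by push_cast; ring
          rw [e]
          exact Nat.cast_le.mpr hKge
        -- 2^(m-R) ≥ lam * 2^m / m
        have h2mR : lam * (2:ℝ)^m / m ≤ (2:ℝ)^(m-R) := by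
          have e : (2:ℝ)^(m-R) * 2^R = 2^m := by
            rw [← pow_add]; congr 1; omega
          rw [div_le_iff₀ hm0]
          nlinarith [hlam2R, (pow_pos (by norm_num : (0:ℝ) < 2) (m-R)).le]
        -- exp(m/3) ≤ 2^m * exp(-m/4)
        have h5 : Real.exp ((m:ℝ)/3) ≤ (2:ℝ)^m * Real.exp (-((m:ℝ)/4)) := by
          rw [hpow2 m, ← Real.exp_add]
          apply Real.exp_le_exp.mpr
          nlinarith [hm0.le, hlog2]
        -- A ≤ K * w
        have h4 : A ≤ ((2^(m-R+t) - 1 : ℕ) : ℝ) * w := by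
          have s1 : A ≤ lam/m * ((2:ℝ)^m * Real.exp (-((m:ℝ)/4))) := by
            rw [hA_def]
            exact mul_le_mul_of_nonneg_left h5 (by positivity)
          have s2 : lam/m * ((2:ℝ)^m * Real.exp (-((m:ℝ)/4)))
              = (lam * 2^m / m) * Real.exp (-((m:ℝ)/4)) := by ring
          have s3 : (lam * 2^m / m) * Real.exp (-((m:ℝ)/4))
              ≤ (2:ℝ)^(m-R) * Real.exp (-((m:ℝ)/4)) :=
            mul_le_mul_of_nonneg_right h2mR (Real.exp_nonneg _)
          have s4 : (2:ℝ)^(m-R) * Real.exp (-((m:ℝ)/4))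
              ≤ ((2^(m-R+t) - 1 : ℕ) : ℝ) * w :=
            mul_le_mul hKge' hw_ge (Real.exp_nonneg _)
              ((by positivity : (0:ℝ) ≤ (2:ℝ)^(m-R)).trans hKge')
          exact ((s1.trans_eq s2).trans s3).trans s4
        have h1nn : 0 ≤ 1 - w := by linarith
        have h1e : 1 - w ≤ Real.exp (-w) := by
          have := Real.add_one_le_exp (-w); linarith
        have hfin : (Real.exp (-w))^(2^(m-R+t) - 1) ≤ Real.exp (-A) := by
          rw [← Real.exp_nat_mul]
          apply Real.exp_le_exp.mpr
          nlinarith [h4]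
        exact (pow_le_pow_left₀ h1nn h1e _).trans hfin
      -- combine
      have hmidnn : (0:ℝ) ≤ (1 - (1-Z)^(2^(R-t)))^(2^(m-R+t) - 1) :=
        pow_nonneg (by linarith) _
      have hfirst : (2:ℝ)^(m - R + t) * (1 - (1-Z)^(2^(R - t)))^(2^(m - R + t) - 1)
          ≤ (2:ℝ)^m * Real.exp (-A) :=
        mul_le_mul hb1 hmid hmidnn (by positivity)
      exact mul_le_mul hfirst hb3 hprodnn (by positivity)
    -- sum the bound
    have hcard : (Finset.Icc 2 R).card ≤ m := by rw [Nat.card_Icc]; omega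
    have hsum1 : (∑ t ∈ Finset.Icc 2 R,
            (2:ℝ)^(m - R + t) * (1 - (1-Z)^(2^(R - t)))^(2^(m - R + t) - 1) *
              ∏ s ∈ Finset.Icc (t+1) R, ((2:ℝ)^(m - R + s) - 1))
        ≤ (m:ℝ) * ((2:ℝ)^m * Real.exp (-A) * 2^(m*m)) := by
      have c1 := Finset.sum_le_card_nsmul _ _ _ key
      rw [nsmul_eq_mul] at c1
      refine c1.trans (mul_le_mul_of_nonneg_right ?_ hBnn)
      exact_mod_cast hcard
    have hsum2 : (m:ℝ) * ((2:ℝ)^m * Real.exp (-A) * 2^(m*m))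
        ≤ Real.exp (-(m:ℝ)) := by
      have heq : (m:ℝ) * ((2:ℝ)^m * Real.exp (-A) * 2^(m*m))
          = Real.exp (Real.log m + (m:ℝ)*Real.log 2 + -A + ((m:ℝ)*(m:ℝ))*Real.log 2) := by
        rw [hpow2 m, hpow2 (m*m)]
        rw [Real.exp_add, Real.exp_add, Real.exp_add, Real.exp_log hm0]
        push_cast
        ring
      rw [heq]
      apply Real.exp_le_exp.mpr
      have hlogm : Real.log (m:ℝ) ≤ (m:ℝ) := by
        have := Real.log_le_sub_one_of_pos hm0; linarith
      nlinarith [hA2m2, hlogm, hlog2'.le, hlog2pos.le, hm3, sq_nonneg ((m:ℝ) - 3)]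
    exact hsum1.trans hsum2
  exact squeeze_zero' hnn hle htend
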